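/- Let v ∈ V. If Ω(k, v + u) = 0 for all k ∈ K and u ∈ U, then the intersection (v + U) ∩ V^Γ is a parallel translate (i.e., a coset) of K; otherwise, this intersection is empty. -/

import Mathlib

namespace TF2

variable {V : Type*} [AddCommGroup V] [Module (ZMod 2) V]

/-- The symplectic transvection `τ_b(x) = x - Ω(x, b) b`. -/
def transv (Om : V →ₗ[ZMod 2] V →ₗ[ZMod 2] ZMod 2) (b : V) (x : V) : V :=
  x - Om x b • b

/-- The group `Γ` of transformations of `V` generated by the transvections `τ_b`, `b ∈ B`. -/
def Gamma (Om : V →ₗ[ZMod 2] V →ₗ[ZMod 2] ZMod 2) (B : Set V) : Subgroup (Equiv.Perm V) :=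
  Subgroup.closure {g | ∃ b ∈ B, ⇑g = transv Om b}

/-- The set `V^Γ` of `Γ`-invariant vectors. -/
def fixedSet (Om : V →ₗ[ZMod 2] V →ₗ[ZMod 2] ZMod 2) (B : Set V) : Set V :=
  {x | ∀ g ∈ Gamma Om B, g x = x}

/-- The parallel translate `v + U` of the span `U` of `B`. -/
def slice (B : Set V) (v : V) : Set V :=
  {x | ∃ u ∈ Submodule.span (ZMod 2) B, x = v + u}

/-- The kernel `K` of the restriction of `Ω` to the span `U` of `B`, as a set. -/
def kerRestrict (Om : V →ₗ[ZMod 2] V →ₗ[ZMod 2] ZMod 2) (B : Set V) : Set V :=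
  {k | k ∈ Submodule.span (ZMod 2) B ∧ ∀ u ∈ Submodule.span (ZMod 2) B, Om k u = 0}

/-- The graph on `B` with `b`, `b'` adjacent iff `Ω(b, b') = 1`. -/
def bGraph (Om : V →ₗ[ZMod 2] V →ₗ[ZMod 2] ZMod 2) (B : Set V) : SimpleGraph B where
  Adj b b' := b ≠ b' ∧ Om b b' = 1 ∧ Om b' b = 1
  symm := by
    constructor
    rintro x y ⟨h1, h2, h3⟩
    exact ⟨h1.symm, h3, h2⟩
  loopless := by
    constructor
    rintro x ⟨h1, -⟩
    exact h1 rfl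

/-- The Dynkin graph `E₆`: a path `0 - 1 - 2 - 3 - 4` with an extra vertex `5` attached to
the middle vertex `2`. -/
def dynkinE6 : SimpleGraph (Fin 6) :=
  SimpleGraph.fromRel fun x y =>
    (x = 0 ∧ y = 1) ∨ (x = 1 ∧ y = 2) ∨ (x = 2 ∧ y = 3) ∨ (x = 3 ∧ y = 4) ∨ (x = 2 ∧ y = 5)

/-- A graph is `E₆`-compatible if it is connected and contains an induced subgraph on six
vertices isomorphic to the Dynkin graph `E₆`. -/
def E6Compatible {α : Type*} (G : SimpleGraph α) : Prop :=
  G.Connected ∧ ∃ f : Fin 6 → α, Function.Injective f ∧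
    ∀ x y, G.Adj (f x) (f y) ↔ dynkinE6.Adj x y


lemma omSymm (Om : V →ₗ[ZMod 2] V →ₗ[ZMod 2] ZMod 2)
    (hAlt : ∀ x, Om x x = 0) (x y : V) : Om x y = Om y x := by
  have h := hAlt (x + y)
  simp only [map_add, LinearMap.add_apply, hAlt] at h
  have h2 : ∀ a b : ZMod 2, 0 + a + (b + 0) = 0 → a = b := by decide
  exact (h2 _ _ h).symm

lemma transv_invol (Om : V →ₗ[ZMod 2] V →ₗ[ZMod 2] ZMod 2)
    (hAlt : ∀ x, Om x x = 0) (b x : V) : transv Om b (transv Om b x) = x := by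
  have h2 : ∀ a : ZMod 2, a + a = 0 := by decide
  simp only [transv, map_sub, map_smul, LinearMap.sub_apply, LinearMap.smul_apply,
    hAlt, smul_eq_mul, mul_zero, sub_zero]
  rw [sub_sub, ← add_smul, h2, zero_smul, sub_zero]

def transvEquiv (Om : V →ₗ[ZMod 2] V →ₗ[ZMod 2] ZMod 2)
    (hAlt : ∀ x, Om x x = 0) (b : V) : Equiv.Perm V where
  toFun := transv Om b
  invFun := transv Om b
  left_inv := transv_invol Om hAlt b
  right_inv := transv_invol Om hAlt b

lemma mem_fixedSet_iff (Om : V →ₗ[ZMod 2] V →ₗ[ZMod 2] ZMod 2)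
    (hAlt : ∀ x, Om x x = 0) {B : Set V}
    (hB : LinearIndependent (ZMod 2) ((↑) : B → V)) (x : V) :
    x ∈ fixedSet Om B ↔ ∀ b ∈ B, Om x b = 0 := by
  constructor
  · intro h b hb
    have hg : transvEquiv Om hAlt b ∈ Gamma Om B :=
      Subgroup.subset_closure ⟨b, hb, rfl⟩
    have hx := h _ hg
    have hx' : x - Om x b • b = x := hx
    have : Om x b • b = 0 := by
      have := sub_eq_iff_eq_add.mp hx'
      linear_combination (norm := module) this.symm
    rcases smul_eq_zero.mp this with h0 | h0
    · exact h0
    · exact absurd h0 (hB.ne_zero ⟨b, hb⟩)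
  · intro h g hg
    induction hg using Subgroup.closure_induction with
    | mem g hg =>
      obtain ⟨b, hb, hgb⟩ := hg
      rw [hgb]
      show x - Om x b • b = x
      rw [h b hb, zero_smul, sub_zero]
    | one => rfl
    | mul g₁ g₂ h₁ h₂ ih₁ ih₂ => simp [Equiv.Perm.mul_apply, ih₂, ih₁]
    | inv g hg ih =>
      conv_lhs => rw [← ih]
      exact Equiv.symm_apply_apply g x



variable {V : Type*} [AddCommGroup V] [Module (ZMod 2) V] [FiniteDimensional (ZMod 2) V]

open Module

set_option synthInstance.maxHeartbeats 1000000 in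
set_option maxHeartbeats 2000000 in
theorem slice_inter_fixed (Om : V →ₗ[ZMod 2] V →ₗ[ZMod 2] ZMod 2)
    (hAlt : ∀ x, Om x x = 0) (B : Set V)
    (hB : LinearIndependent (ZMod 2) ((↑) : B → V)) (v : V) :
    ((∀ k ∈ kerRestrict Om B, ∀ u ∈ Submodule.span (ZMod 2) B, Om k (v + u) = 0) →
      ∃ w : V, slice B v ∩ fixedSet Om B = (fun k => w + k) '' kerRestrict Om B) ∧
    (¬ (∀ k ∈ kerRestrict Om B, ∀ u ∈ Submodule.span (ZMod 2) B, Om k (v + u) = 0) →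
      slice B v ∩ fixedSet Om B = ∅) := by
  set U : Submodule (ZMod 2) V := Submodule.span (ZMod 2) B with hU
  have haa : ∀ a : ZMod 2, a + a = 0 := by decide
  -- a fixed vector pairs to zero with everything in U
  have hfix0 : ∀ x ∈ fixedSet Om B, ∀ u ∈ U, Om x u = 0 := by
    intro x hx u hu
    have hb := (mem_fixedSet_iff Om hAlt hB x).mp hx
    have : U ≤ LinearMap.ker (Om x) := Submodule.span_le.mpr fun b hb' =>
      LinearMap.mem_ker.mpr (hb b hb')
    exact this hu
  constructor
  · intro hyp
    -- the map f : U → Dual U, u ↦ Ω(u, ·)|U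
    set f : U →ₗ[ZMod 2] Module.Dual (ZMod 2) U :=
      (Om.compl₂ U.subtype).comp U.subtype with hf
    have hfapp : ∀ (u x : U), f u x = Om u x := fun u x => rfl
    have hker : ∀ k : U, k ∈ LinearMap.ker f ↔ ∀ x ∈ U, Om k x = 0 := by
      intro k
      rw [LinearMap.mem_ker]
      constructor
      · intro hk x hx
        have := congrArg (fun φ => φ ⟨x, hx⟩) hk
        simpa [hfapp] using this
      · intro hk
        ext x
        simpa [hfapp] using hk x x.2
    have hle : LinearMap.range f ≤ (LinearMap.ker f).dualAnnihilator := by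
      rintro φ ⟨u, rfl⟩
      rw [Submodule.mem_dualAnnihilator]
      intro k hk
      rw [hfapp, omSymm Om hAlt]
      exact (hker k).mp hk u u.2
    have hrange : LinearMap.range f = (LinearMap.ker f).dualAnnihilator := by
      apply Submodule.eq_of_le_of_finrank_le hle
      have e := Subspace.quotEquivAnnihilator (LinearMap.ker f)
      have h1 : finrank (ZMod 2) (LinearMap.ker f).dualAnnihilator
          = finrank (ZMod 2) (U ⧸ LinearMap.ker f) := e.finrank_eq.symm
      have h2 := Submodule.finrank_quotient_add_finrank (LinearMap.ker f)
      have h3 := LinearMap.finrank_range_add_finrank_ker f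
      omega
    -- the functional Ω(v,·)|U lies in the annihilator of ker f
    set φ : Module.Dual (ZMod 2) U := (Om v).comp U.subtype with hφ
    have hφmem : φ ∈ (LinearMap.ker f).dualAnnihilator := by
      rw [Submodule.mem_dualAnnihilator]
      intro k hk
      have hkK : (k : V) ∈ kerRestrict Om B := ⟨k.2, (hker k).mp hk⟩
      have := hyp k hkK 0 (zero_mem U)
      rw [add_zero] at this
      show Om v k = 0
      rw [omSymm Om hAlt]
      exact this
    rw [← hrange] at hφmem
    obtain ⟨u₀, hu₀⟩ := hφmem
    refine ⟨v + (u₀ : V), ?_⟩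
    have hw : ∀ x ∈ U, Om (v + (u₀ : V)) x = 0 := by
      intro x hx
      have h1 : Om u₀ x = Om v x := by
        have := congrArg (fun ψ => ψ ⟨x, hx⟩) hu₀
        simpa [hfapp, hφ] using this
      rw [map_add, LinearMap.add_apply, h1, haa]
    have hwfix : (v + (u₀ : V)) ∈ fixedSet Om B :=
      (mem_fixedSet_iff Om hAlt hB _).mpr fun b hb => hw b (Submodule.subset_span hb)
    ext x
    constructor
    · rintro ⟨⟨u, hu, rfl⟩, hxfix⟩
      refine ⟨u - u₀, ⟨sub_mem hu u₀.2, ?_⟩, by abel⟩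
      intro u' hu'
      have h1 : Om (v + u) u' = 0 := hfix0 _ hxfix u' hu'
      have h2 : Om (v + (u₀ : V)) u' = 0 := hw u' hu'
      have : Om (u - u₀) u' = Om (v + u) u' - Om (v + (u₀:V)) u' := by
        simp [map_add, map_sub]
      rw [this, h1, h2, sub_zero]
    · rintro ⟨k, ⟨hkU, hkK⟩, rfl⟩
      constructor
      · exact ⟨(u₀ : V) + k, add_mem u₀.2 hkU, by abel⟩
      · refine (mem_fixedSet_iff Om hAlt hB _).mpr fun b hb => ?_
        have hbU : b ∈ U := Submodule.subset_span hb
        rw [map_add, LinearMap.add_apply, hw b hbU, omSymm Om hAlt k b, zero_add]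
        rw [omSymm Om hAlt b k]
        exact hkK b hbU
  · intro hyp
    rw [Set.eq_empty_iff_forall_notMem]
    rintro x ⟨⟨u, hu, rfl⟩, hxfix⟩
    apply hyp
    intro k hk u' hu'
    have h1 : Om k u' = 0 := hk.2 u' hu'
    have h2 : Om k v = 0 := by
      have h3 : Om (v + u) k = 0 := hfix0 _ hxfix k hk.1
      have h4 : Om u k = 0 := omSymm Om hAlt u k ▸ hk.2 u hu
      rw [omSymm Om hAlt k v]
      have : Om v k = Om (v + u) k - Om u k := by simp [map_add]
      rw [this, h3, h4, sub_zero]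
    rw [map_add, h2, h1, add_zero]

end TF2
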